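/- Let β = b(1-μ_l)(1-μ_p) and consider the delay map x_{t+1} = (1-μ_a)x_t + β·x_{t-3}·exp(-c₁x_{t-3} - c₂x_t). Every nonnegative solution satisfies limsup_{t→∞} x_t ≤ β/(e·c₁·μ_a), provided c₁ > 0 and μ_a ∈ (0,1). -/

import Mathlib

open Real Filter

theorem stmt_15 (β c₁ c₂ μa : ℝ)
    (hβ : 0 < β) (hc₁ : 0 < c₁) (hc₂ : 0 < c₂) (hμa : μa ∈ Set.Ioo (0:ℝ) 1)
    (x : ℕ → ℝ) (hxnn : ∀ t, 0 ≤ x t)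
    (hrec : ∀ t, x (t + 4) = (1 - μa) * x (t + 3) +
      β * x t * Real.exp (-c₁ * x t - c₂ * x (t + 3))) :
    Filter.limsup x Filter.atTop ≤ β / (Real.exp 1 * c₁ * μa) := by
  obtain ⟨hμ0, hμ1⟩ := hμa
  set M : ℝ := β / (Real.exp 1 * c₁) with hM
  have hMpos : 0 < M := div_pos hβ (by positivity)
  -- Step A: pointwise bound on recursion
  have hstep : ∀ t, x (t + 4) ≤ (1 - μa) * x (t + 3) + M := by
    intro t
    rw [hrec t]
    gcongr ?_ + ?_
    · exact le_rfl
    · have h1 : Real.exp (-c₁ * x t - c₂ * x (t + 3))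
          = Real.exp (-(c₁ * x t)) * Real.exp (-(c₂ * x (t+3))) := by
        rw [← Real.exp_add]; ring_nf
      have h2 : Real.exp (-(c₂ * x (t+3))) ≤ 1 :=
        Real.exp_le_one_iff.2 (by nlinarith [hxnn (t+3)])
      have h3 : x t * Real.exp (-(c₁ * x t)) ≤ 1 / (Real.exp 1 * c₁) := by
        have hE : 0 < Real.exp (c₁ * x t) := Real.exp_pos _
        have hE1 : 0 < Real.exp 1 := Real.exp_pos 1
        have key : (c₁ * x t) * Real.exp 1 ≤ Real.exp (c₁ * x t) := by
          have h := Real.add_one_le_exp (c₁ * x t - 1)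
          have h' : c₁ * x t ≤ Real.exp (c₁ * x t - 1) := by linarith
          rw [Real.exp_sub, le_div_iff₀ hE1] at h'
          exact h'
        rw [Real.exp_neg, le_div_iff₀ (by positivity)]
        have hnn : 0 ≤ (Real.exp (c₁ * x t) - (c₁ * x t) * Real.exp 1)
            * (Real.exp (c₁ * x t))⁻¹ :=
          mul_nonneg (by linarith) (inv_pos.2 hE).le
        have hinv : Real.exp (c₁ * x t) * (Real.exp (c₁ * x t))⁻¹ = 1 :=
          mul_inv_cancel₀ hE.ne'
        nlinarith [hinv, hnn]
      calc β * x t * Real.exp (-c₁ * x t - c₂ * x (t + 3))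
          = β * ((x t * Real.exp (-(c₁ * x t))) * Real.exp (-(c₂ * x (t+3)))) := by
            rw [h1]; ring
        _ ≤ β * ((1 / (Real.exp 1 * c₁)) * 1) := by
            have h0 : 0 ≤ x t * Real.exp (-(c₁ * x t)) :=
              mul_nonneg (hxnn t) (Real.exp_pos _).le
            gcongr
        _ = M := by rw [hM]; ring
  -- Step B: global bound
  set C : ℝ := max (max (max (x 0) (x 1)) (max (x 2) (x 3))) (M / μa) with hC
  have hMC : M ≤ μa * C := by
    have : M / μa ≤ C := le_max_right _ _
    calc M = μa * (M / μa) := by field_simp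
      _ ≤ μa * C := by gcongr
  have hbdd : ∀ n, x n ≤ C := by
    intro n
    induction n using Nat.strong_induction_on with
    | _ n ih =>
      match n with
      | 0 => exact le_trans (le_trans (le_max_left _ _) (le_max_left _ _)) (le_max_left _ _)
      | 1 => exact le_trans (le_trans (le_max_right _ _) (le_max_left _ _)) (le_max_left _ _)
      | 2 => exact le_trans (le_trans (le_max_left _ _) (le_max_right _ _)) (le_max_left _ _)
      | 3 => exact le_trans (le_trans (le_max_right _ _) (le_max_right _ _)) (le_max_left _ _)
      | (t + 4) =>
        have h3 : x (t + 3) ≤ C := ih (t + 3) (by omega)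
        calc x (t + 4) ≤ (1 - μa) * x (t + 3) + M := hstep t
          _ ≤ (1 - μa) * C + μa * C := by
              gcongr
          _ = C := by ring
  have hBddAbove : Filter.IsBoundedUnder (· ≤ ·) Filter.atTop x :=
    ⟨C, Filter.eventually_atTop.2 ⟨0, fun n _ => hbdd n⟩⟩
  have hCobdd : Filter.IsCoboundedUnder (· ≤ ·) Filter.atTop x :=
    Filter.isCoboundedUnder_le_of_le Filter.atTop hxnn
  set L : ℝ := Filter.limsup x Filter.atTop with hL
  -- Step C: for every ε > 0, L ≤ (1-μa)(L+ε) + M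
  have hkey : ∀ ε > (0:ℝ), L ≤ (1 - μa) * (L + ε) + M := by
    intro ε hε
    have hlt : L < L + ε := by linarith
    have hev : ∀ᶠ n in Filter.atTop, x n < L + ε :=
      Filter.eventually_lt_of_limsup_lt hlt hBddAbove
    obtain ⟨N, hN⟩ := Filter.eventually_atTop.1 hev
    have hev2 : ∀ᶠ n in Filter.atTop, x n ≤ (1 - μa) * (L + ε) + M := by
      refine Filter.eventually_atTop.2 ⟨N + 4, fun n hn => ?_⟩
      obtain ⟨t, rfl⟩ : ∃ t, n = t + 4 := ⟨n - 4, by omega⟩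
      calc x (t + 4) ≤ (1 - μa) * x (t + 3) + M := hstep t
        _ ≤ (1 - μa) * (L + ε) + M := by
            gcongr
            · exact (hN (t + 3) (by omega)).le
    exact Filter.limsup_le_of_le hCobdd hev2
  -- conclude μa * L ≤ M
  have hmain : μa * L ≤ M := by
    refine le_of_forall_pos_le_add fun δ hδ => ?_
    have hε : (0:ℝ) < δ / (1 - μa) := div_pos hδ (by linarith)
    have := hkey _ hε
    have h1μ : (1 - μa) * (δ / (1 - μa)) = δ := by
      rw [mul_comm, div_mul_cancel₀ _ (by linarith : (1:ℝ) - μa ≠ 0)]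
    nlinarith
  have : L ≤ M / μa := (le_div_iff₀' hμ0).2 hmain
  calc L ≤ M / μa := this
    _ = β / (Real.exp 1 * c₁ * μa) := by rw [hM, div_div]
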